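/- If G and H are connected graphs with |V(G)| ≥ 2 and |V(H)| ≥ 3, c is an exact rainbow-free r-coloring of G □ H with r ≥ 3, and w_i w_j is an edge of H, then the union of the copies G_i and G_j receives at most 2 colors: |c(V(G_i) ∪ V(G_j))| ≤ 2. -/

import Mathlib

open SimpleGraph

/-- A rainbow 3-AP in `G` under coloring `c`: three vertices with
`d(v₁,v₂) = d(v₂,v₃)` receiving pairwise distinct colors. -/
def HasRainbow3AP {V C : Type*} (G : SimpleGraph V) (c : V → C) : Prop :=
  ∃ v₁ v₂ v₃ : V, G.dist v₁ v₂ = G.dist v₂ v₃ ∧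
    c v₁ ≠ c v₂ ∧ c v₂ ≠ c v₃ ∧ c v₁ ≠ c v₃

/-- The anti-van der Waerden number `aw(G,3)`: the least positive `r` such that
every surjective coloring with `r` colors yields a rainbow 3-AP. -/
noncomputable def aw {V : Type*} (G : SimpleGraph V) : ℕ :=
  sInf {r : ℕ | 0 < r ∧ ∀ c : V → Fin r, Function.Surjective c → HasRainbow3AP G c}


namespace AVDWaux

variable {V W : Type*} {G : SimpleGraph V} {H : SimpleGraph W}

lemma boxProd_dist_ge (hG : G.Connected) (hH : H.Connected) :
    ∀ {x y : V × W} (p : (G □ H).Walk x y),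
      G.dist x.1 y.1 + H.dist x.2 y.2 ≤ p.length := by
  intro x y p
  induction p with
  | nil => simp
  | @cons u v w h p ih =>
    rw [SimpleGraph.Walk.length_cons]
    rcases SimpleGraph.boxProd_adj.mp h with ⟨hadj, heq⟩ | ⟨hadj, heq⟩
    · have h1 : G.dist u.1 w.1 ≤ G.dist u.1 v.1 + G.dist v.1 w.1 := hG.dist_triangle
      have h2 : G.dist u.1 v.1 = 1 := SimpleGraph.dist_eq_one_iff_adj.mpr hadj
      have h3 : H.dist u.2 w.2 = H.dist v.2 w.2 := by rw [heq]
      omega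
    · have h1 : H.dist u.2 w.2 ≤ H.dist u.2 v.2 + H.dist v.2 w.2 := hH.dist_triangle
      have h2 : H.dist u.2 v.2 = 1 := SimpleGraph.dist_eq_one_iff_adj.mpr hadj
      have h3 : G.dist u.1 w.1 = G.dist v.1 w.1 := by rw [heq]
      omega

lemma boxProd_dist (hG : G.Connected) (hH : H.Connected) (a b : V) (w w' : W) :
    (G □ H).dist (a, w) (b, w') = G.dist a b + H.dist w w' := by
  refine le_antisymm ?_ ?_
  · obtain ⟨p, hp⟩ := hG.exists_walk_length_eq_dist a b
    obtain ⟨q, hq⟩ := hH.exists_walk_length_eq_dist w w'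
    have := SimpleGraph.dist_le ((p.boxProdLeft H w).append (q.boxProdRight G b))
    have e1 : (p.boxProdLeft H w).length = p.length := SimpleGraph.Walk.length_map ..
    have e2 : (q.boxProdRight G b).length = q.length := SimpleGraph.Walk.length_map ..
    rwa [SimpleGraph.Walk.length_append, e1, e2, hp, hq] at this
  · obtain ⟨p, hp⟩ := (hG.boxProd hH).exists_walk_length_eq_dist (a, w) (b, w')
    rw [← hp]
    exact boxProd_dist_ge hG hH p

lemma exists_nbr (hG : G.Connected) {e a : V} (h : G.dist e a ≠ 0) :
    ∃ v, G.dist e v + 1 = G.dist e a ∧ G.dist a v = 1 := by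
  obtain ⟨p, hp⟩ := hG.exists_walk_length_eq_dist e a
  have hnn : ¬ p.reverse.Nil := by
    intro hnil
    rw [SimpleGraph.Walk.nil_iff_length_eq, SimpleGraph.Walk.length_reverse, hp] at hnil
    exact h hnil
  obtain ⟨v, hadj, q, hq⟩ := SimpleGraph.Walk.not_nil_iff.mp hnn
  refine ⟨v, ?_, SimpleGraph.dist_eq_one_iff_adj.mpr hadj⟩
  have hlq : q.length + 1 = G.dist e a := by
    have := SimpleGraph.Walk.length_reverse p
    rw [hq, SimpleGraph.Walk.length_cons, hp] at this
    omega
  have h1 : G.dist e v ≤ q.length := by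
    have := SimpleGraph.dist_le q.reverse
    rwa [SimpleGraph.Walk.length_reverse] at this
  have h2 : G.dist e a ≤ G.dist e v + G.dist v a := hG.dist_triangle
  have h3 : G.dist v a = 1 := SimpleGraph.dist_eq_one_iff_adj.mpr hadj.symm
  omega

lemma exists_adj_ne {C : Type*} (F : V → C) :
    ∀ {x y : V} (_ : G.Walk x y), F x ≠ F y → ∃ u v, G.Adj u v ∧ F u ≠ F v := by
  intro x y p
  induction p with
  | nil => exact fun h => absurd rfl h
  | @cons u v w h p ih =>
    intro hne
    by_cases hc : F u = F v
    · exact ih (fun hh => hne (hc.trans hh))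
    · exact ⟨u, v, h, hc⟩

lemma walk_third {i j : W} :
    ∀ {x w : W} (_ : H.Walk x w), (x = i ∨ x = j) → w ≠ i → w ≠ j →
      ∃ k, k ≠ i ∧ k ≠ j ∧ (H.Adj k i ∨ H.Adj k j) := by
  intro x w p
  induction p with
  | nil =>
    rintro (rfl | rfl) hi hj
    · exact absurd rfl hi
    · exact absurd rfl hj
  | @cons x y w h p ih =>
    intro hx hi hj
    by_cases hy : y = i ∨ y = j
    · exact ih hy hi hj
    · push_neg at hy
      refine ⟨y, hy.1, hy.2, ?_⟩
      rcases hx with rfl | rfl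
      · exact Or.inl h.symm
      · exact Or.inr h.symm

lemma exists_third [Fintype W] (hH : H.Connected) (hW : 3 ≤ Fintype.card W) (i j : W) :
    ∃ k, k ≠ i ∧ k ≠ j ∧ (H.Adj k i ∨ H.Adj k j) := by
  classical
  obtain ⟨w, hwi, hwj⟩ : ∃ w : W, w ≠ i ∧ w ≠ j := by
    by_contra hcon
    push_neg at hcon
    have hsub : (Finset.univ : Finset W) ⊆ {i, j} := by
      intro w _
      rcases em (w = i) with h | h
      · simp [h]
      · simp [hcon w h]
    have := Finset.card_le_card hsub
    have h2 : ({i, j} : Finset W).card ≤ 2 := Finset.card_insert_le _ _ |>.trans (by simp)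
    rw [Finset.card_univ] at this
    omega
  obtain ⟨p⟩ := hH i w
  exact walk_third p (Or.inl rfl) hwi hwj




/-- "Not rainbow": some two of the three colors coincide. -/
def NRp {C : Type*} (x y z : C) : Prop := x = y ∨ y = z ∨ x = z

section NRlemmas
variable {C : Type*} {x y z : C}

lemma NRp.mem12 (h : NRp x y z) (hne : x ≠ y) : z = x ∨ z = y := by
  rcases h with h | h | h
  · exact absurd h hne
  · exact Or.inr h.symm
  · exact Or.inl h.symm

lemma NRp.mem13 (h : NRp x y z) (hne : x ≠ z) : y = x ∨ y = z := by
  rcases h with h | h | h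
  · exact Or.inl h.symm
  · exact Or.inr h
  · exact absurd h hne

lemma NRp.mem23 (h : NRp x y z) (hne : y ≠ z) : x = y ∨ x = z := by
  rcases h with h | h | h
  · exact Or.inl h
  · exact absurd h hne
  · exact Or.inr h

lemma NRp.elim3 (h : NRp x y z) (h1 : x ≠ y) (h2 : x ≠ z) (h3 : y ≠ z) : False := by
  rcases h with h | h | h
  exacts [h1 h, h3 h, h2 h]

lemma NRp.swap23 (h : NRp x y z) : NRp x z y := by
  rcases h with h | h | h
  exacts [Or.inr (Or.inr h), Or.inr (Or.inl h.symm), Or.inl h]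

end NRlemmas

section Abstract

variable {V : Type*} {C : Type*}

/-- Core inductive lemma ("Q"): three copies `F` (copy i), `Gc` (copy j), `Hc` (copy k),
with `H`-distances d(i,j)=1, d(j,k)=1, d(i,k)=2.  A bichromatic vertex `a`
(`F a ≠ Gc a`) together with a third color appearing in `F` forces a rainbow
(here: `False`, since the `NRp` facts hold). -/
theorem Qlemma (D : V → V → ℕ)
    (hD0 : ∀ x, D x x = 0) (hDs : ∀ x y, D x y = D y x)
    (hDz : ∀ x y, D x y = 0 → x = y)
    (hgeo : ∀ e a, D e a ≠ 0 → ∃ v, D e v + 1 = D e a ∧ D a v = 1) :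
    ∀ (n : ℕ) (F Gc Hc : V → C),
    (∀ u v w, D u v = D u w + 1 → NRp (F u) (F v) (Gc w)) →
    (∀ u v w, D u v = D u w + 1 → NRp (Gc u) (Gc v) (F w)) →
    (∀ u v w, D u v = D u w + 1 → NRp (F u) (Gc v) (Hc w)) →
    (∀ u v w, D u v = D u w → NRp (Gc u) (F v) (Hc w)) →
    (∀ u v w, D u v = D u w + 1 → NRp (Hc u) (Hc v) (Gc w)) →
    (∀ u v w, D u v = D u w + 1 → NRp (Gc u) (Gc v) (Hc w)) →
    (∀ u v w, D u v = D u w + 1 → NRp (Hc u) (Gc v) (F w)) →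
    ∀ a e, F a ≠ Gc a → F e ≠ F a → F e ≠ Gc a → D e a = n → False := by
  intro n
  induction n using Nat.strong_induction_on with
  | _ n IH =>
  intro F Gc Hc A1 A2 A3 A4 A1' A2' A3' a e hbi h1 h2 hd
  by_cases hn0 : n = 0
  · subst hn0
    exact h1 (by rw [hDz e a hd])
  by_cases hn1 : n = 1
  · subst hn1
    have := A1 a e a (by rw [hD0, hDs]; omega)
    exact this.elim3 (fun h => h1 h.symm) hbi h2
  -- n ≥ 2
  obtain ⟨v, hv1, hv2⟩ := hgeo e a (by omega)
  -- F v ∈ {F a, Gc a}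
  have hfv : F v = F a ∨ F v = Gc a :=
    (A1 a v a (by rw [hD0]; omega)).mem13 hbi
  -- Gc v = F a
  have hgv : Gc v = F a := by
    have g1 := (A1 e a v (by omega)).mem12 h1
    have g2 := (A2 a v a (by rw [hD0]; omega)).mem13 (fun h => hbi h.symm)
    rcases g1 with g1 | g1
    · rcases g2 with g2 | g2
      · exact absurd (g1.symm.trans g2) h2
      · exact g2
    · exact g1
  rcases hfv with hfv | hfv
  · -- F v = F a : use the H-copy
    have hhv : Hc v = Gc a := by
      have g1 := (A3 e a v (by omega)).mem12 h2
      have g2 := (A4 a v v rfl).mem12 (fun h => hbi (h.trans hfv).symm)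
      rcases g1 with g1 | g1
      · rcases g2 with g2 | g2
        · exact absurd (g1.symm.trans g2) h2
        · exact absurd (g1.symm.trans (g2.trans hfv)) h1
      · exact g1
    have hhe : Hc e = Gc a ∨ Hc e = F e :=
      (A4 a e e rfl).mem12 (fun h => h2 h.symm)
    rcases hhe with hhe | hhe
    · exact (A4 v e e rfl).elim3
        (by rw [hgv]; exact fun h => h1 h.symm)
        (by rw [hgv, hhe]; exact hbi)
        (by rw [hhe]; exact h2)
    · -- Hc e = F e (the third color) : mirror induction
      refine IH (n - 1) (by omega) Hc Gc F A1' A2' A3'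
        (fun u v w h => ((A4 u w v h.symm).swap23)) A1 A2 A3 v e ?_ ?_ ?_ (by omega)
      · rw [hhv, hgv]; exact fun h => hbi h.symm
      · rw [hhe, hhv]; exact h2
      · rw [hhe, hgv]; exact h1
  · -- F v = Gc a : descend within copies i,j
    exact IH (n - 1) (by omega) F Gc Hc A1 A2 A3 A4 A1' A2' A3' v e
      (by rw [hfv, hgv]; exact fun h => hbi h.symm)
      (by rw [hfv]; exact h2) (by rw [hgv]; exact h1) (by omega)

/-- Core lemma "R": third color appearing in the middle copy `Gc`. -/
theorem Rlemma (D : V → V → ℕ)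
    (hD0 : ∀ x, D x x = 0) (hDs : ∀ x y, D x y = D y x)
    (hDz : ∀ x y, D x y = 0 → x = y)
    (hgeo : ∀ e a, D e a ≠ 0 → ∃ v, D e v + 1 = D e a ∧ D a v = 1)
    (F Gc : V → C)
    (B1 : ∀ u v w, D u v + 1 = D u w → NRp (Gc u) (F v) (Gc w))
    (A2 : ∀ u v w, D u v = D u w + 1 → NRp (Gc u) (Gc v) (F w))
    (hQ : ∀ a e, F a ≠ Gc a → F e ≠ F a → F e ≠ Gc a → False) :
    ∀ (n : ℕ), ∀ a e, F a ≠ Gc a → Gc e ≠ F a → Gc e ≠ Gc a → D e a = n → False := by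
  intro n
  induction n using Nat.strong_induction_on with
  | _ n IH =>
  intro a e hbi h1 h2 hd
  by_cases hn0 : n = 0
  · subst hn0
    exact h2 (by rw [hDz e a hd])
  by_cases hn1 : n = 1
  · subst hn1
    exact (B1 a a e (by rw [hD0, hDs]; omega)).elim3
      (fun h => hbi h.symm) (fun h => h2 h.symm) (fun h => h1 h.symm)
  -- n ≥ 2
  obtain ⟨v, hv1, hv2⟩ := hgeo e a (by omega)
  have hfv : F v = Gc e ∨ F v = Gc a := (B1 e v a (by omega)).mem13 h2
  rcases hfv with hfv | hfv
  · exact hQ a v hbi (by rw [hfv]; exact h1) (by rw [hfv]; exact h2)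
  · have hgv : Gc v = Gc a ∨ Gc v = F a :=
      (A2 a v a (by rw [hD0]; omega)).mem13 (fun h => hbi h.symm)
    rcases hgv with hgv | hgv
    · -- chain of (β,β) vertices toward e
      have S : ∀ τ, τ < n → ∀ v', D e v' = τ → F v' = Gc a → Gc v' = Gc a → False := by
        intro τ
        induction τ using Nat.strong_induction_on with
        | _ τ IHS =>
        intro hτn v' hdv hfv' hgv'
        by_cases hτ0 : τ = 0
        · subst hτ0
          exact h2 (by rw [hDz e v' hdv, hgv'])
        obtain ⟨w, hw1, hw2⟩ := hgeo e v' (by omega)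
        have hfw : F w = Gc e ∨ F w = Gc a := by
          have := (B1 e w v' (by omega)).mem13 (by rw [hgv']; exact h2)
          rcases this with h | h
          · exact Or.inl h
          · exact Or.inr (h.trans hgv')
        rcases hfw with hfw | hfw
        · exact hQ a w hbi (by rw [hfw]; exact h1) (by rw [hfw]; exact h2)
        · by_cases hgw : Gc w = Gc a
          · exact IHS (τ - 1) (by omega) (by omega) w (by omega) hfw hgw
          · by_cases hgw2 : Gc w = F a
            · exact IH (τ - 1) (by omega) w e
                (by rw [hfw, hgw2]; exact fun h => hbi h.symm)
                (by rw [hfw]; exact h2) (by rw [hgw2]; exact h1) (by omega)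
            · exact hQ w a (by rw [hfw]; exact fun h => hgw h.symm)
                (by rw [hfw]; exact hbi) (fun h => hgw2 h.symm)
      exact S (n - 1) (by omega) v (by omega) hfv hgv
    · -- Gc v = F a : descend
      exact IH (n - 1) (by omega) v e
        (by rw [hfv, hgv]; exact fun h => hbi h.symm)
        (by rw [hfv]; exact h2) (by rw [hgv]; exact h1) (by omega)

/-- The triangle case (`k` adjacent to both `i` and `j`). -/
theorem T1lemma (D : V → V → ℕ)
    (hD0 : ∀ x, D x x = 0) (hDs : ∀ x y, D x y = D y x)
    (hDz : ∀ x y, D x y = 0 → x = y)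
    (hgeo : ∀ e a, D e a ≠ 0 → ∃ v, D e v + 1 = D e a ∧ D a v = 1)
    (F Gc Hc : V → C)
    (C1 : ∀ b v w, D b v = D b w → NRp (Hc b) (F v) (Gc w))
    (C2 : ∀ b v w, D b v = D b w → NRp (Gc b) (F v) (Hc w))
    (C3 : ∀ b v w, D b v = D b w → NRp (F b) (Gc v) (Hc w))
    (C4 : ∀ u v w, D u v = D u w + 1 → NRp (F u) (F v) (Gc w))
    (a e : V) (hbi : F a ≠ Gc a) (h1 : F e ≠ F a) (h2 : F e ≠ Gc a) : False := by
  have hhe : Hc e = Gc a := by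
    have g1 := (C1 e a a rfl).mem23 hbi
    have g2 := (C2 a e e rfl).mem12 (fun h => h2 h.symm)
    rcases g1 with g1 | g1
    · rcases g2 with g2 | g2
      · exact absurd (g1.symm.trans g2) hbi
      · exact absurd (g1.symm.trans g2).symm h1
    · exact g1
  have hha : Hc a = F a ∨ Hc a = Gc a := (C1 a a a rfl).mem23 hbi
  rcases hha with hha | hha
  · -- Hc a = F a
    have hge : Gc e = F e ∨ Gc e = Gc a := by
      have := (C2 e e e rfl).mem23 (by rw [hhe]; exact h2)
      rw [hhe] at this
      exact this
    rcases hge with hge | hge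
    · exact (C3 a e e rfl).elim3 (by rw [hge]; exact fun h => h1 h.symm)
        (by rw [hhe]; exact hbi) (by rw [hge, hhe]; exact h2)
    · exact (C1 a e e rfl).elim3 (by rw [hha]; exact fun h => h1 h.symm)
        (by rw [hha, hge]; exact hbi) (by rw [hge]; exact h2)
  · -- Hc a = Gc a : the whole copy j is colored Gc a, then rainbow on a geodesic
    have hgb : ∀ b, Gc b = Gc a := by
      intro b
      have g1 := (C2 b e e rfl).mem23 (by rw [hhe]; exact h2)
      have g2 := (C2 b a a rfl).mem23 (by rw [hha]; exact hbi)
      rw [hhe] at g1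
      rw [hha] at g2
      rcases g1 with g1 | g1
      · rcases g2 with g2 | g2
        · exact absurd (g1.symm.trans g2) h1
        · exact absurd (g1.symm.trans g2) h2
      · exact g1
    have hda : D a e ≠ 0 := fun h => h1 (by rw [hDz a e h])
    obtain ⟨v, hv1, hv2⟩ := hgeo a e hda
    exact (C4 a e v (by omega)).elim3 (fun h => h1 h.symm)
      (by rw [hgb v]; exact hbi) (by rw [hgb v]; exact h2)

/-- The case where the two adjacent copies are identically colored. -/
theorem Case1lemma (D : V → V → ℕ)
    (hDs : ∀ x y, D x y = D y x)
    (htri : ∀ e u v, D u v = 1 → D e u ≤ D e v + 1)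
    (F : V → C)
    (E1 : ∀ e u v, D e u = D e v → NRp (F e) (F u) (F v))
    (E2 : ∀ e u v, D e u = D e v + 1 → NRp (F e) (F u) (F v))
    (u v e : V) (huv : D u v = 1) (hne : F u ≠ F v)
    (h1 : F e ≠ F u) (h2 : F e ≠ F v) : False := by
  have hvu : D v u = 1 := by rw [hDs]; exact huv
  have t1 := htri e u v huv
  have t2 := htri e v u hvu
  rcases Nat.lt_trichotomy (D e u) (D e v) with h | h | h
  · have : D e v = D e u + 1 := by omega
    exact (E2 e v u this).elim3 h2 h1 (fun h => hne h.symm)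
  · exact (E1 e u v h).elim3 h1 h2 hne
  · have : D e u = D e v + 1 := by omega
    exact (E2 e u v this).elim3 h1 h2 hne

end Abstract
end AVDWaux


theorem stmt_4 {V W : Type*} [Fintype V] [Fintype W]
    (G : SimpleGraph V) (H : SimpleGraph W)
    (hG : G.Connected) (hH : H.Connected)
    (hV : 2 ≤ Fintype.card V) (hW : 3 ≤ Fintype.card W)
    (r : ℕ) (hr : 3 ≤ r) (c : V × W → Fin r) (hc : Function.Surjective c)
    (hrf : ¬ HasRainbow3AP (G □ H) c) (i j : W) (hij : H.Adj i j) :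
    (Finset.univ.image (fun u : V => c (u, i)) ∪
      Finset.univ.image (fun u : V => c (u, j))).card ≤ 2 := by
  classical
  by_contra hcard
  push_neg at hcard
  rw [Finset.two_lt_card] at hcard
  obtain ⟨x, hx, y, hy, z, hz, hxy, hxz, hyz⟩ := hcard
  have getP : ∀ t : Fin r, t ∈ (Finset.univ.image (fun u : V => c (u, i)) ∪
      Finset.univ.image (fun u : V => c (u, j))) →
      ∃ P : V × W, (P.2 = i ∨ P.2 = j) ∧ c P = t := by
    intro t ht
    rcases Finset.mem_union.mp ht with h | h
    · obtain ⟨u, -, hu⟩ := Finset.mem_image.mp h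
      exact ⟨(u, i), Or.inl rfl, hu⟩
    · obtain ⟨u, -, hu⟩ := Finset.mem_image.mp h
      exact ⟨(u, j), Or.inr rfl, hu⟩
  obtain ⟨X, hX, hcX⟩ := getP x hx
  obtain ⟨Y, hY, hcY⟩ := getP y hy
  obtain ⟨Z, hZ, hcZ⟩ := getP z hz
  have hXY : c X ≠ c Y := by rw [hcX, hcY]; exact hxy
  have hXZ : c X ≠ c Z := by rw [hcX, hcZ]; exact hxz
  have hYZ : c Y ≠ c Z := by rw [hcY, hcZ]; exact hyz
  clear hcX hcY hcZ hx hy hz hxy hxz hyz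
  have hD0 : ∀ u : V, G.dist u u = 0 := fun u => SimpleGraph.dist_self
  have hDs : ∀ u v : V, G.dist u v = G.dist v u := fun u v => SimpleGraph.dist_comm
  have hDz : ∀ u v : V, G.dist u v = 0 → u = v := fun u v h => (hG.dist_eq_zero_iff).mp h
  have hgeo : ∀ e a : V, G.dist e a ≠ 0 →
      ∃ v, G.dist e v + 1 = G.dist e a ∧ G.dist a v = 1 :=
    fun e a h => AVDWaux.exists_nbr hG h
  have BD : ∀ (a b : V) (w w' : W),
      (G □ H).dist (a, w) (b, w') = G.dist a b + H.dist w w' :=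
    fun a b w w' => AVDWaux.boxProd_dist hG hH a b w w'
  have master : ∀ U A B : V × W, (G □ H).dist U A = (G □ H).dist U B →
      AVDWaux.NRp (c U) (c A) (c B) := by
    intro U A B h
    by_contra hcon
    unfold AVDWaux.NRp at hcon
    push_neg at hcon
    refine hrf ⟨A, U, B, ?_, fun hh => hcon.1 hh.symm, hcon.2.2, hcon.2.1⟩
    rw [SimpleGraph.dist_comm]
    exact h
  have aux : ∀ i' j' k : W, H.Adj i' j' → H.Adj k j' → k ≠ i' →
      (X.2 = i' ∨ X.2 = j') → (Y.2 = i' ∨ Y.2 = j') → (Z.2 = i' ∨ Z.2 = j') → False := by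
    intro i' j' k hij' hkj' hki hX' hY' hZ'
    have dii : H.dist i' i' = 0 := SimpleGraph.dist_self
    have djj : H.dist j' j' = 0 := SimpleGraph.dist_self
    have dkk : H.dist k k = 0 := SimpleGraph.dist_self
    have dij : H.dist i' j' = 1 := SimpleGraph.dist_eq_one_iff_adj.mpr hij'
    have dji : H.dist j' i' = 1 := by rw [SimpleGraph.dist_comm]; exact dij
    have dkj : H.dist k j' = 1 := SimpleGraph.dist_eq_one_iff_adj.mpr hkj'
    have djk : H.dist j' k = 1 := by rw [SimpleGraph.dist_comm]; exact dkj
    by_cases hbi : ∃ a : V, c (a, i') ≠ c (a, j')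
    · obtain ⟨a, hbia⟩ := hbi
      have hex : ∃ P : V × W, (P.2 = i' ∨ P.2 = j') ∧
          c P ≠ c (a, i') ∧ c P ≠ c (a, j') := by
        by_contra hno
        push_neg at hno
        have hm : ∀ P : V × W, (P.2 = i' ∨ P.2 = j') →
            c P = c (a, i') ∨ c P = c (a, j') := by
          intro P hP
          by_cases h1 : c P = c (a, i')
          · exact Or.inl h1
          · exact Or.inr (hno P hP h1)
        rcases hm X hX' with h1 | h1 <;> rcases hm Y hY' with h2 | h2 <;>
          rcases hm Z hZ' with h3 | h3 <;>
          first
            | exact hXY (h1.trans h2.symm)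
            | exact hXZ (h1.trans h3.symm)
            | exact hYZ (h2.trans h3.symm)
      obtain ⟨P, hw, hPa, hPb⟩ := hex
      by_cases hadjki : H.Adj k i'
      · -- triangle case
        have dki : H.dist k i' = 1 := SimpleGraph.dist_eq_one_iff_adj.mpr hadjki
        have dik : H.dist i' k = 1 := by rw [SimpleGraph.dist_comm]; exact dki
        have C1 : ∀ b v w : V, G.dist b v = G.dist b w →
            AVDWaux.NRp (c (b, k)) (c (v, i')) (c (w, j')) := fun b v w h =>
          master (b, k) (v, i') (w, j') (by rw [BD, BD, dki, dkj]; omega)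
        have C2 : ∀ b v w : V, G.dist b v = G.dist b w →
            AVDWaux.NRp (c (b, j')) (c (v, i')) (c (w, k)) := fun b v w h =>
          master (b, j') (v, i') (w, k) (by rw [BD, BD, dji, djk]; omega)
        have C3 : ∀ b v w : V, G.dist b v = G.dist b w →
            AVDWaux.NRp (c (b, i')) (c (v, j')) (c (w, k)) := fun b v w h =>
          master (b, i') (v, j') (w, k) (by rw [BD, BD, dij, dik]; omega)
        have C4 : ∀ u v w : V, G.dist u v = G.dist u w + 1 →
            AVDWaux.NRp (c (u, i')) (c (v, i')) (c (w, j')) := fun u v w h =>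
          master (u, i') (v, i') (w, j') (by rw [BD, BD, dii, dij]; omega)
        have C5 : ∀ u v w : V, G.dist u v = G.dist u w + 1 →
            AVDWaux.NRp (c (u, j')) (c (v, j')) (c (w, i')) := fun u v w h =>
          master (u, j') (v, j') (w, i') (by rw [BD, BD, djj, dji]; omega)
        rcases hw with hw | hw
        · rw [show P = (P.1, i') from by rw [← hw]] at hPa hPb
          exact AVDWaux.T1lemma G.dist hD0 hDs hDz hgeo
            (fun u => c (u, i')) (fun u => c (u, j')) (fun u => c (u, k))
            C1 C2 C3 C4 a P.1 hbia hPa hPb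
        · rw [show P = (P.1, j') from by rw [← hw]] at hPa hPb
          exact AVDWaux.T1lemma G.dist hD0 hDs hDz hgeo
            (fun u => c (u, j')) (fun u => c (u, i')) (fun u => c (u, k))
            (fun b v w h => (C1 b w v h.symm).swap23) C3 C2 C5 a P.1
            (fun h => hbia h.symm) hPb hPa
      · -- path case : H.dist i' k = 2
        have dki : H.dist k i' = 2 := by
          have hle : H.dist k i' ≤ 2 := by
            have := SimpleGraph.dist_le
              (SimpleGraph.Walk.cons hkj' (SimpleGraph.Walk.cons hij'.symm SimpleGraph.Walk.nil))
            simpa using this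
          have hne0 : H.dist k i' ≠ 0 := fun h => hki (hH.dist_eq_zero_iff.mp h)
          have hne1 : H.dist k i' ≠ 1 := fun h => hadjki (SimpleGraph.dist_eq_one_iff_adj.mp h)
          omega
        have dik : H.dist i' k = 2 := by rw [SimpleGraph.dist_comm]; exact dki
        have A1 : ∀ u v w : V, G.dist u v = G.dist u w + 1 →
            AVDWaux.NRp (c (u, i')) (c (v, i')) (c (w, j')) := fun u v w h =>
          master (u, i') (v, i') (w, j') (by rw [BD, BD, dii, dij]; omega)
        have A2 : ∀ u v w : V, G.dist u v = G.dist u w + 1 →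
            AVDWaux.NRp (c (u, j')) (c (v, j')) (c (w, i')) := fun u v w h =>
          master (u, j') (v, j') (w, i') (by rw [BD, BD, djj, dji]; omega)
        have A3 : ∀ u v w : V, G.dist u v = G.dist u w + 1 →
            AVDWaux.NRp (c (u, i')) (c (v, j')) (c (w, k)) := fun u v w h =>
          master (u, i') (v, j') (w, k) (by rw [BD, BD, dij, dik]; omega)
        have A4 : ∀ u v w : V, G.dist u v = G.dist u w →
            AVDWaux.NRp (c (u, j')) (c (v, i')) (c (w, k)) := fun u v w h =>
          master (u, j') (v, i') (w, k) (by rw [BD, BD, dji, djk]; omega)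
        have A1' : ∀ u v w : V, G.dist u v = G.dist u w + 1 →
            AVDWaux.NRp (c (u, k)) (c (v, k)) (c (w, j')) := fun u v w h =>
          master (u, k) (v, k) (w, j') (by rw [BD, BD, dkk, dkj]; omega)
        have A2' : ∀ u v w : V, G.dist u v = G.dist u w + 1 →
            AVDWaux.NRp (c (u, j')) (c (v, j')) (c (w, k)) := fun u v w h =>
          master (u, j') (v, j') (w, k) (by rw [BD, BD, djj, djk]; omega)
        have A3' : ∀ u v w : V, G.dist u v = G.dist u w + 1 →
            AVDWaux.NRp (c (u, k)) (c (v, j')) (c (w, i')) := fun u v w h =>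
          master (u, k) (v, j') (w, i') (by rw [BD, BD, dkj, dki]; omega)
        have B1 : ∀ u v w : V, G.dist u v + 1 = G.dist u w →
            AVDWaux.NRp (c (u, j')) (c (v, i')) (c (w, j')) := fun u v w h =>
          master (u, j') (v, i') (w, j') (by rw [BD, BD, dji, djj]; omega)
        rcases hw with hw | hw
        · rw [show P = (P.1, i') from by rw [← hw]] at hPa hPb
          exact AVDWaux.Qlemma G.dist hD0 hDs hDz hgeo (G.dist P.1 a)
            (fun u => c (u, i')) (fun u => c (u, j')) (fun u => c (u, k))
            A1 A2 A3 A4 A1' A2' A3' a P.1 hbia hPa hPb rfl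
        · rw [show P = (P.1, j') from by rw [← hw]] at hPa hPb
          have hQ : ∀ a' e' : V, c (a', i') ≠ c (a', j') → c (e', i') ≠ c (a', i') →
              c (e', i') ≠ c (a', j') → False := fun a' e' u1 u2 u3 =>
            AVDWaux.Qlemma G.dist hD0 hDs hDz hgeo (G.dist e' a')
              (fun u => c (u, i')) (fun u => c (u, j')) (fun u => c (u, k))
              A1 A2 A3 A4 A1' A2' A3' a' e' u1 u2 u3 rfl
          exact AVDWaux.Rlemma G.dist hD0 hDs hDz hgeo
            (fun u => c (u, i')) (fun u => c (u, j')) B1 A2 hQ (G.dist P.1 a)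
            a P.1 hbia hPa hPb rfl
    · -- the two copies are identically colored
      push_neg at hbi
      have rep : ∀ P : V × W, (P.2 = i' ∨ P.2 = j') → c P = c (P.1, i') := by
        intro P hP
        rcases hP with hP | hP
        · rw [show P = (P.1, i') from by rw [← hP]]
        · rw [show P = (P.1, j') from by rw [← hP]]
          exact (hbi P.1).symm
      have hFXY : c (X.1, i') ≠ c (Y.1, i') := by
        rw [← rep X hX', ← rep Y hY']; exact hXY
      have hFXZ : c (X.1, i') ≠ c (Z.1, i') := by
        rw [← rep X hX', ← rep Z hZ']; exact hXZ
      have hFYZ : c (Y.1, i') ≠ c (Z.1, i') := by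
        rw [← rep Y hY', ← rep Z hZ']; exact hYZ
      obtain ⟨p⟩ := hG.preconnected X.1 Y.1
      obtain ⟨u, v, hadj, hne⟩ := AVDWaux.exists_adj_ne (fun t => c (t, i')) p hFXY
      have hthird : ∃ e : V, c (e, i') ≠ c (u, i') ∧ c (e, i') ≠ c (v, i') := by
        by_contra hno
        push_neg at hno
        have hm : ∀ e : V, c (e, i') = c (u, i') ∨ c (e, i') = c (v, i') := by
          intro e
          by_cases h1 : c (e, i') = c (u, i')
          · exact Or.inl h1
          · exact Or.inr (hno e h1)
        rcases hm X.1 with h1 | h1 <;> rcases hm Y.1 with h2 | h2 <;>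
          rcases hm Z.1 with h3 | h3 <;>
          first
            | exact hFXY (h1.trans h2.symm)
            | exact hFXZ (h1.trans h3.symm)
            | exact hFYZ (h2.trans h3.symm)
      obtain ⟨e, he1, he2⟩ := hthird
      have E1 : ∀ e u v : V, G.dist e u = G.dist e v →
          AVDWaux.NRp (c (e, i')) (c (u, i')) (c (v, i')) := fun e u v h =>
        master (e, i') (u, i') (v, i') (by rw [BD, BD, dii]; omega)
      have E2 : ∀ e u v : V, G.dist e u = G.dist e v + 1 →
          AVDWaux.NRp (c (e, i')) (c (u, i')) (c (v, i')) := by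
        intro e u v h
        have := master (e, i') (u, i') (v, j') (by rw [BD, BD, dii, dij]; omega)
        rwa [← hbi v] at this
      have htri : ∀ e u v : V, G.dist u v = 1 → G.dist e u ≤ G.dist e v + 1 := by
        intro e u v h
        have ht := hG.dist_triangle (u := e) (v := v) (w := u)
        have h' : G.dist v u = 1 := by rw [SimpleGraph.dist_comm]; exact h
        omega
      exact AVDWaux.Case1lemma G.dist hDs htri (fun t => c (t, i')) E1 E2 u v e
        (SimpleGraph.dist_eq_one_iff_adj.mpr hadj) hne he1 he2
  obtain ⟨k, hki, hkj, hadj⟩ := AVDWaux.exists_third hH hW i j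
  rcases hadj with h | h
  · exact aux j i k hij.symm h hkj (Or.symm hX) (Or.symm hY) (Or.symm hZ)
  · exact aux i j k hij h hki hX hY hZ
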